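/- Every member of a δ-minimal rational security set V of a coalition S is secured under the coalition-optimal security strategy of S ∪ V. -/

import Mathlib

open Finset

/-- In-neighbors of `i`: players `j` with an arc `(j, i)`. -/
def inN {V : Type*} [Fintype V] (A : V → V → Prop) [DecidableRel A] (i : V) : Finset V :=
  Finset.univ.filter fun j => A j i

/-- Cost of coalition `S` when exactly `W ⊆ S` is secured. -/
noncomputable def coalCost {V : Type*} [Fintype V] [DecidableEq V]
    (A : V → V → Prop) [DecidableRel A] (θ L : V → ℝ) (ξ : V → V → ℝ)
    (S W : Finset V) : ℝ :=
  ∑ i ∈ W, (θ i + ∑ j ∈ inN A i \ W, ξ j i) + ∑ i ∈ S \ W, L i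

/-- Coalition-optimal security cost `c(S) = min_{W ⊆ S} coalCost S W`. -/
noncomputable def cCoal {V : Type*} [Fintype V] [DecidableEq V]
    (A : V → V → Prop) [DecidableRel A] (θ L : V → ℝ) (ξ : V → V → ℝ)
    (S : Finset V) : ℝ :=
  (S.powerset.image (coalCost A θ L ξ S)).min'
    (Finset.Nonempty.image ⟨∅, Finset.empty_mem_powerset S⟩ _)

/-- every member of a δ-minimal rational security set `B` of a
coalition `S` is secured under the coalition-optimal security strategy of
`S ∪ B`: any optimal secured set `W` of the coalition `S ∪ B` contains `B`. -/
theorem minimal_rational_security_set_secured {V : Type*} [Fintype V] [DecidableEq V]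
    (A : V → V → Prop) [DecidableRel A] (θ L : V → ℝ) (ξ : V → V → ℝ)
    (hθ : ∀ i, 0 ≤ θ i) (hL : ∀ i, 0 ≤ L i) (hξ : ∀ i j, 0 ≤ ξ i j)
    (S B : Finset V) (δ δstar : ℕ) (hδ : 1 ≤ δ) (hδstar : δstar ≤ δ)
    (hdisj : Disjoint B S) (hcard : B.card = δstar)
    (hrat : cCoal A θ L ξ (S ∪ B) < cCoal A θ L ξ S + ∑ v ∈ B, L v)
    (hmin : ∀ W : Finset V, Disjoint W S → W.card < δstar →
      ¬ (cCoal A θ L ξ (S ∪ W) < cCoal A θ L ξ S + ∑ v ∈ W, L v))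
    (W : Finset V) (hWsub : W ⊆ S ∪ B)
    (hWopt : coalCost A θ L ξ (S ∪ B) W = cCoal A θ L ξ (S ∪ B)) :
    B ⊆ W := by
  intro b hb
  by_contra hbW
  set B' := B.erase b with hB'
  have hbS : b ∉ S := fun h => (Finset.disjoint_left.mp hdisj hb) h
  have hWsub' : W ⊆ S ∪ B' := by
    intro x hx
    rcases Finset.mem_union.mp (hWsub hx) with h | h
    · exact Finset.mem_union_left _ h
    · exact Finset.mem_union_right _ (Finset.mem_erase.mpr ⟨fun he => hbW (he ▸ hx), h⟩)
  have hinsB : insert b B' = B := Finset.insert_erase hb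
  have hbnotSB' : b ∉ S ∪ B' := by
    simp [hbS, hB']
  have hins : insert b (S ∪ B') = S ∪ B := by
    rw [Finset.union_comm S B', ← Finset.insert_union, hinsB, Finset.union_comm]
  have hcost : coalCost A θ L ξ (S ∪ B) W = coalCost A θ L ξ (S ∪ B') W + L b := by
    unfold coalCost
    have h1 : (S ∪ B) \ W = insert b ((S ∪ B') \ W) := by
      rw [← hins, Finset.insert_sdiff_of_notMem _ hbW]
    rw [h1, Finset.sum_insert (by simp [hbnotSB'])]
    ring
  have hmin' : cCoal A θ L ξ (S ∪ B') ≤ coalCost A θ L ξ (S ∪ B') W :=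
    Finset.min'_le _ _ (Finset.mem_image_of_mem _ (Finset.mem_powerset.mpr hWsub'))
  have hsum : ∑ v ∈ B, L v = L b + ∑ v ∈ B', L v := by
    rw [← hinsB, Finset.sum_insert (Finset.notMem_erase _ _)]
  have hlt : cCoal A θ L ξ (S ∪ B') < cCoal A θ L ξ S + ∑ v ∈ B', L v := by
    have := hrat
    rw [← hWopt, hcost, hsum] at this
    linarith
  have hdisj' : Disjoint B' S := Finset.disjoint_of_subset_left (Finset.erase_subset _ _) hdisj
  have hcard' : B'.card < δstar := by
    have h1 : 1 ≤ δstar := hcard ▸ Finset.card_pos.mpr ⟨b, hb⟩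
    rw [hB', Finset.card_erase_of_mem hb, hcard]
    omega
  exact hmin B' hdisj' hcard' hlt
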